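/- Fix p ∈ [1,∞). Let μ₁, ν₁ ∈ P(X₁) and μ₂, ν₂ ∈ P(X₂), and let π ∈ Π(μ₁,μ₂) and σ ∈ Π(ν₁,ν₂). Then W_p(π,σ)^p ≥ W_p^p(μ₁,ν₁) + W_p^p(μ₂,ν₂), where on the left W_p is taken with respect to the metric d_p on X₁×X₂ and on the right with respect to the ℓ_p metrics on X₁ and X₂. Consequently, inf{W_p(π,σ) : σ ∈ Π(ν₁,ν₂)} ≥ (W_p^p(μ₁,ν₁) + W_p^p(μ₂,ν₂))^{1/p}. -/
import Mathlib


open MeasureTheory ProbabilityTheory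
open scoped ENNReal

noncomputable section

abbrev Vec (n : ℕ) : Type := Fin n → ℝ

/-- ℓ_p distance on ℝ^n. -/
def lpDist (p : ℝ) {n : ℕ} (x y : Vec n) : ℝ := (∑ i, |x i - y i| ^ p) ^ (1 / p)

/-- product metric d_p on ℝ^{d₁} × ℝ^{d₂}. -/
def prodDist (p : ℝ) {n m : ℕ} (x y : Vec n × Vec m) : ℝ :=
  (lpDist p x.1 y.1 ^ p + lpDist p x.2 y.2 ^ p) ^ (1 / p)

/-- γ is a coupling of α and β. -/
def IsCoupling {E : Type*} [MeasurableSpace E] (γ : Measure (E × E)) (α β : Measure E) : Prop :=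
  IsProbabilityMeasure γ ∧ γ.map Prod.fst = α ∧ γ.map Prod.snd = β

/-- p-Wasserstein distance (p < ∞) w.r.t. a cost/metric c. -/
def Wp {E : Type*} [MeasurableSpace E] (p : ℝ) (c : E → E → ℝ) (α β : Measure E) : ℝ :=
  sInf ((fun γ : Measure (E × E) => (∫ z, c z.1 z.2 ^ p ∂γ) ^ (1 / p)) '' {γ | IsCoupling γ α β})

/-- ∞-Wasserstein distance w.r.t. a cost/metric c. -/
def Winf {E : Type*} [MeasurableSpace E] (c : E → E → ℝ) (α β : Measure E) : ℝ :=
  sInf ((fun γ : Measure (E × E) => essSup (fun z => c z.1 z.2) γ) '' {γ | IsCoupling γ α β})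

/-- q-Wasserstein distance for q ∈ [1,∞]. -/
def Wq {E : Type*} [MeasurableSpace E] (q : ℝ≥0∞) (c : E → E → ℝ) (α β : Measure E) : ℝ :=
  if q = ∞ then Winf c α β else Wp q.toReal c α β

/-- μ is a Borel probability measure concentrated on X. -/
def ProbOn {E : Type*} [MeasurableSpace E] (μ : Measure E) (X : Set E) : Prop :=
  IsProbabilityMeasure μ ∧ μ Xᶜ = 0

/-- ρ is absolutely continuous with Lebesgue density bounded above and below by strictly
positive constants on X, and vanishing off X. -/
def NiceDensityOn {E : Type*} [MeasureSpace E] (ρ : Measure E) (X : Set E) : Prop :=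
  ∃ (f : E → ℝ≥0∞) (c₁ c₂ : ℝ≥0∞), 0 < c₁ ∧ c₂ < ∞ ∧ ρ = volume.withDensity f ∧
    (∀ x ∈ X, c₁ ≤ f x ∧ f x ≤ c₂) ∧ (∀ x ∉ X, f x = 0)

/-- T is an optimal transport map from α to β for W_p w.r.t. cost c. -/
def IsOptMap {E : Type*} [MeasurableSpace E] (p : ℝ) (c : E → E → ℝ) (α β : Measure E)
    (T : E → E) : Prop :=
  Measurable T ∧ α.map T = β ∧ (∫ x, c x (T x) ^ p ∂α) ^ (1 / p) = Wp p c α β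

/-- Π(μ₁, μ₂): couplings of μ₁ and μ₂. -/
def Pi2 {d₁ d₂ : ℕ} (μ₁ : Measure (Vec d₁)) (μ₂ : Measure (Vec d₂)) :
    Set (Measure (Vec d₁ × Vec d₂)) :=
  {π | IsProbabilityMeasure π ∧ π.map Prod.fst = μ₁ ∧ π.map Prod.snd = μ₂}

/-- S is a shadow of ρ onto Π(μ₁,μ₂) for the p-Wasserstein distance. -/
def IsShadow2 (p : ℝ) {d₁ d₂ : ℕ} (ρ : Measure (Vec d₁ × Vec d₂))
    (μ₁ : Measure (Vec d₁)) (μ₂ : Measure (Vec d₂)) (S : Measure (Vec d₁ × Vec d₂)) : Prop :=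
  ∃ (κ₁ : Kernel (Vec d₁) (Vec d₁)) (κ₂ : Kernel (Vec d₂) (Vec d₂)),
    IsMarkovKernel κ₁ ∧ IsMarkovKernel κ₂ ∧
    (∃ γ₁ : Measure (Vec d₁ × Vec d₁),
      (∀ A, MeasurableSet A → γ₁ A = ∫⁻ y, κ₁ y {x | (x, y) ∈ A} ∂(ρ.map Prod.fst)) ∧
      IsCoupling γ₁ μ₁ (ρ.map Prod.fst) ∧
      (∫ z, lpDist p z.1 z.2 ^ p ∂γ₁) ^ (1 / p) = Wp p (lpDist p) μ₁ (ρ.map Prod.fst)) ∧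
    (∃ γ₂ : Measure (Vec d₂ × Vec d₂),
      (∀ A, MeasurableSet A → γ₂ A = ∫⁻ y, κ₂ y {x | (x, y) ∈ A} ∂(ρ.map Prod.snd)) ∧
      IsCoupling γ₂ μ₂ (ρ.map Prod.snd) ∧
      (∫ z, lpDist p z.1 z.2 ^ p ∂γ₂) ^ (1 / p) = Wp p (lpDist p) μ₂ (ρ.map Prod.snd)) ∧
    (∀ A : Set (Vec d₁ × Vec d₂), MeasurableSet A →
      S A = ∫⁻ y, ((κ₁ y.1).prod (κ₂ y.2)) A ∂ρ)

/-- d_{X,p}: product metric on a K-fold product of Euclidean spaces. -/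
def piDist (p : ℝ) {K : ℕ} {d : Fin K → ℕ} (x y : (i : Fin K) → Vec (d i)) : ℝ :=
  (∑ i, lpDist p (x i) (y i) ^ p) ^ (1 / p)

/-- S is a shadow of ρ onto Π(μ₁,…,μ_K) for the p-Wasserstein distance. -/
def IsShadowK (p : ℝ) {K : ℕ} {d : Fin K → ℕ} (ρ : Measure ((i : Fin K) → Vec (d i)))
    (μ : (i : Fin K) → Measure (Vec (d i))) (S : Measure ((i : Fin K) → Vec (d i))) : Prop :=
  ∃ κ : (i : Fin K) → Kernel (Vec (d i)) (Vec (d i)),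
    (∀ i, IsMarkovKernel (κ i)) ∧
    (∀ i, ∃ γ : Measure (Vec (d i) × Vec (d i)),
      (∀ A, MeasurableSet A → γ A = ∫⁻ y, κ i y {x | (x, y) ∈ A} ∂(ρ.map fun z => z i)) ∧
      IsCoupling γ (μ i) (ρ.map fun z => z i) ∧
      (∫ z, lpDist p z.1 z.2 ^ p ∂γ) ^ (1 / p) = Wp p (lpDist p) (μ i) (ρ.map fun z => z i)) ∧
    (∀ A, MeasurableSet A → S A = ∫⁻ y, Measure.pi (fun i => κ i (y i)) A ∂ρ)


section Aux

lemma lpDist_nonneg (p : ℝ) {n : ℕ} (x y : Vec n) : 0 ≤ lpDist p x y :=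
  Real.rpow_nonneg (Finset.sum_nonneg fun i _ => Real.rpow_nonneg (abs_nonneg _) _) _

lemma lpDist_pow (p : ℝ) (hp : p ≠ 0) {n : ℕ} (x y : Vec n) :
    lpDist p x y ^ p = ∑ i, |x i - y i| ^ p := by
  rw [lpDist, one_div, Real.rpow_inv_rpow
    (Finset.sum_nonneg fun i _ => Real.rpow_nonneg (abs_nonneg _) _) hp]

lemma lpDist_pow_nonneg (p : ℝ) {n : ℕ} (x y : Vec n) : 0 ≤ lpDist p x y ^ p :=
  Real.rpow_nonneg (lpDist_nonneg p x y) _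

lemma prodDist_pow (p : ℝ) (hp : p ≠ 0) {n m : ℕ} (x y : Vec n × Vec m) :
    prodDist p x y ^ p = lpDist p x.1 y.1 ^ p + lpDist p x.2 y.2 ^ p := by
  rw [prodDist, one_div, Real.rpow_inv_rpow
    (add_nonneg (lpDist_pow_nonneg p _ _) (lpDist_pow_nonneg p _ _)) hp]

lemma measurable_lpDist_pow {p : ℝ} (hp : 0 ≤ p) {n : ℕ} :
    Measurable (fun z : Vec n × Vec n => lpDist p z.1 z.2 ^ p) := by
  have hc : Continuous (fun t : ℝ => t ^ p) := Real.continuous_rpow_const hp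
  have hc' : Continuous (fun t : ℝ => t ^ (1 / p)) :=
    Real.continuous_rpow_const (by positivity)
  unfold lpDist
  exact hc.measurable.comp (hc'.measurable.comp
    (Finset.measurable_sum _ fun i _ => hc.measurable.comp
      ((((measurable_pi_apply i).comp measurable_fst).sub
        ((measurable_pi_apply i).comp measurable_snd)).abs)))

lemma wp_mem_nonneg {E : Type*} [MeasurableSpace E] (p : ℝ) (c : E → E → ℝ)
    (hc : ∀ x y, 0 ≤ c x y) (α β : Measure E) :
    ∀ s ∈ ((fun γ : Measure (E × E) => (∫ z, c z.1 z.2 ^ p ∂γ) ^ (1 / p)) ''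
      {γ | IsCoupling γ α β}), 0 ≤ s := by
  rintro s ⟨γ, -, rfl⟩
  exact Real.rpow_nonneg (integral_nonneg fun z => Real.rpow_nonneg (hc _ _) _) _

lemma wp_nonneg {E : Type*} [MeasurableSpace E] (p : ℝ) (c : E → E → ℝ)
    (hc : ∀ x y, 0 ≤ c x y) (α β : Measure E) : 0 ≤ Wp p c α β :=
  Real.sInf_nonneg (wp_mem_nonneg p c hc α β)

lemma prod_coupling {E : Type*} [MeasurableSpace E] (α β : Measure E)
    [IsProbabilityMeasure α] [IsProbabilityMeasure β] : IsCoupling (α.prod β) α β := by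
  refine ⟨by infer_instance, ?_, ?_⟩
  · rw [Measure.map_fst_prod]; simp
  · rw [Measure.map_snd_prod]; simp

/-- Key inequality for a single coordinate: if γ is a coupling of π and σ whose first-coordinate
marginals are probability measures concentrated on a compact set, then `Wp^p ≤ ∫ cost`. -/
lemma key {d₁ d₂ : ℕ} {X₁ : Set (Vec d₁)} {X₂ : Set (Vec d₂)}
    (hX₁c : IsCompact X₁) (hX₂c : IsCompact X₂)
    {p : ℝ} (hp : 1 ≤ p)
    {μ₁ ν₁ : Measure (Vec d₁)} {μ₂ ν₂ : Measure (Vec d₂)}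
    (hμ₁ : ProbOn μ₁ X₁) (hν₁ : ProbOn ν₁ X₁) (hμ₂ : ProbOn μ₂ X₂) (hν₂ : ProbOn ν₂ X₂)
    {π σ : Measure (Vec d₁ × Vec d₂)} (hπ : π ∈ Pi2 μ₁ μ₂) (hσ : σ ∈ Pi2 ν₁ ν₂) :
    Wp p (lpDist p) μ₁ ν₁ ^ p + Wp p (lpDist p) μ₂ ν₂ ^ p ≤ Wp p (prodDist p) π σ ^ p := by
  have hp0 : (0 : ℝ) < p := lt_of_lt_of_le one_pos hp
  have hpne : p ≠ 0 := hp0.ne'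
  haveI : IsProbabilityMeasure π := hπ.1
  haveI : IsProbabilityMeasure σ := hσ.1
  haveI : IsProbabilityMeasure μ₁ := hμ₁.1
  haveI : IsProbabilityMeasure ν₁ := hν₁.1
  haveI : IsProbabilityMeasure μ₂ := hμ₂.1
  haveI : IsProbabilityMeasure ν₂ := hν₂.1
  set A := Wp p (lpDist p) μ₁ ν₁ ^ p with hA
  set B := Wp p (lpDist p) μ₂ ν₂ ^ p with hB
  have hA0 : 0 ≤ A :=
    Real.rpow_nonneg (wp_nonneg _ _ (fun x y => lpDist_nonneg p x y) _ _) _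
  have hB0 : 0 ≤ B :=
    Real.rpow_nonneg (wp_nonneg _ _ (fun x y => lpDist_nonneg p x y) _ _) _
  -- bounds from compactness
  obtain ⟨R₁, hR₁⟩ := (Metric.isBounded_iff_subset_closedBall 0).1 hX₁c.isBounded
  obtain ⟨R₂, hR₂⟩ := (Metric.isBounded_iff_subset_closedBall 0).1 hX₂c.isBounded
  have hbd : ∀ {n : ℕ} {X : Set (Vec n)} {R : ℝ}, X ⊆ Metric.closedBall 0 R →
      ∀ x ∈ X, ∀ y ∈ X, lpDist p x y ^ p ≤ (n : ℝ) * (2 * |R|) ^ p := by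
    intro n X R hR x hx y hy
    rw [lpDist_pow p hpne]
    calc ∑ i, |x i - y i| ^ p ≤ ∑ _i : Fin n, (2 * |R|) ^ p := by
          refine Finset.sum_le_sum fun i _ => Real.rpow_le_rpow (abs_nonneg _) ?_ hp0.le
          have hxn : ‖x‖ ≤ |R| := le_trans
            (by simpa using Metric.mem_closedBall.mp (hR hx)) (le_abs_self R)
          have hyn : ‖y‖ ≤ |R| := le_trans
            (by simpa using Metric.mem_closedBall.mp (hR hy)) (le_abs_self R)
          have h1 : |x i - y i| ≤ |x i| + |y i| := abs_sub _ _
          have h2 : |x i| ≤ ‖x‖ := by simpa using norm_le_pi_norm x i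
          have h3 : |y i| ≤ ‖y‖ := by simpa using norm_le_pi_norm y i
          nlinarith
      _ = (n : ℝ) * (2 * |R|) ^ p := by
          rw [Finset.sum_const, Finset.card_univ, Fintype.card_fin, nsmul_eq_mul]
  have hX₁m : MeasurableSet X₁ := hX₁c.isClosed.measurableSet
  have hX₂m : MeasurableSet X₂ := hX₂c.isClosed.measurableSet
  -- main step: for every coupling γ of π, σ, A + B ≤ ∫ cost ∂γ
  have main : ∀ γ : Measure ((Vec d₁ × Vec d₂) × (Vec d₁ × Vec d₂)), IsCoupling γ π σ →
      A + B ≤ ∫ z, prodDist p z.1 z.2 ^ p ∂γ := by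
    intro γ hγ
    obtain ⟨hγprob, hγ1, hγ2⟩ := hγ
    haveI : IsProbabilityMeasure γ := hγprob
    set T₁ : (Vec d₁ × Vec d₂) × (Vec d₁ × Vec d₂) → Vec d₁ × Vec d₁ :=
      fun z => (z.1.1, z.2.1) with hT₁def
    set T₂ : (Vec d₁ × Vec d₂) × (Vec d₁ × Vec d₂) → Vec d₂ × Vec d₂ :=
      fun z => (z.1.2, z.2.2) with hT₂def
    have hT₁ : Measurable T₁ := (measurable_fst.fst).prodMk (measurable_snd.fst)
    have hT₂ : Measurable T₂ := (measurable_fst.snd).prodMk (measurable_snd.snd)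
    -- marginal identities
    have hmap11 : γ.map (fun z => z.1.1) = μ₁ := by
      have : γ.map (fun z : (Vec d₁ × Vec d₂) × (Vec d₁ × Vec d₂) => z.1.1)
          = (γ.map Prod.fst).map Prod.fst := by
        rw [Measure.map_map measurable_fst measurable_fst]; rfl
      rw [this, hγ1, hπ.2.1]
    have hmap12 : γ.map (fun z => z.1.2) = μ₂ := by
      have : γ.map (fun z : (Vec d₁ × Vec d₂) × (Vec d₁ × Vec d₂) => z.1.2)
          = (γ.map Prod.fst).map Prod.snd := by
        rw [Measure.map_map measurable_snd measurable_fst]; rfl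
      rw [this, hγ1, hπ.2.2]
    have hmap21 : γ.map (fun z => z.2.1) = ν₁ := by
      have : γ.map (fun z : (Vec d₁ × Vec d₂) × (Vec d₁ × Vec d₂) => z.2.1)
          = (γ.map Prod.snd).map Prod.fst := by
        rw [Measure.map_map measurable_fst measurable_snd]; rfl
      rw [this, hγ2, hσ.2.1]
    have hmap22 : γ.map (fun z => z.2.2) = ν₂ := by
      have : γ.map (fun z : (Vec d₁ × Vec d₂) × (Vec d₁ × Vec d₂) => z.2.2)
          = (γ.map Prod.snd).map Prod.snd := by
        rw [Measure.map_map measurable_snd measurable_snd]; rfl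
      rw [this, hγ2, hσ.2.2]
    -- a.e. membership
    have haemem : ∀ (f : (Vec d₁ × Vec d₂) × (Vec d₁ × Vec d₂) → Vec d₁)
        (hf : Measurable f) (ρ : Measure (Vec d₁)) (hρ : γ.map f = ρ) (hρ0 : ρ X₁ᶜ = 0),
        ∀ᵐ z ∂γ, f z ∈ X₁ := by
      intro f hf ρ hρ hρ0
      rw [ae_iff]
      have : {z | ¬ f z ∈ X₁} = f ⁻¹' X₁ᶜ := rfl
      rw [this, ← Measure.map_apply hf hX₁m.compl, hρ, hρ0]
    have haemem' : ∀ (f : (Vec d₁ × Vec d₂) × (Vec d₁ × Vec d₂) → Vec d₂)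
        (hf : Measurable f) (ρ : Measure (Vec d₂)) (hρ : γ.map f = ρ) (hρ0 : ρ X₂ᶜ = 0),
        ∀ᵐ z ∂γ, f z ∈ X₂ := by
      intro f hf ρ hρ hρ0
      rw [ae_iff]
      have : {z | ¬ f z ∈ X₂} = f ⁻¹' X₂ᶜ := rfl
      rw [this, ← Measure.map_apply hf hX₂m.compl, hρ, hρ0]
    have hae11 := haemem _ measurable_fst.fst μ₁ hmap11 hμ₁.2
    have hae21 := haemem _ measurable_snd.fst ν₁ hmap21 hν₁.2
    have hae12 := haemem' _ measurable_fst.snd μ₂ hmap12 hμ₂.2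
    have hae22 := haemem' _ measurable_snd.snd ν₂ hmap22 hν₂.2
    -- integrability
    set f₁ : (Vec d₁ × Vec d₂) × (Vec d₁ × Vec d₂) → ℝ :=
      fun z => lpDist p (T₁ z).1 (T₁ z).2 ^ p with hf₁def
    set f₂ : (Vec d₁ × Vec d₂) × (Vec d₁ × Vec d₂) → ℝ :=
      fun z => lpDist p (T₂ z).1 (T₂ z).2 ^ p with hf₂def
    have hmf₁ : Measurable f₁ := by
      have H := (measurable_lpDist_pow (p := p) (n := d₁) hp0.le).comp hT₁
      exact H
    have hmf₂ : Measurable f₂ := by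
      have H := (measurable_lpDist_pow (p := p) (n := d₂) hp0.le).comp hT₂
      exact H
    have hif₁ : Integrable f₁ γ := by
      refine (integrable_const ((d₁ : ℝ) * (2 * |R₁|) ^ p)).mono'
        hmf₁.aestronglyMeasurable ?_
      filter_upwards [hae11, hae21] with z h1 h2
      rw [Real.norm_of_nonneg (lpDist_pow_nonneg p _ _)]
      exact hbd hR₁ _ h1 _ h2
    have hif₂ : Integrable f₂ γ := by
      refine (integrable_const ((d₂ : ℝ) * (2 * |R₂|) ^ p)).mono'
        hmf₂.aestronglyMeasurable ?_
      filter_upwards [hae12, hae22] with z h1 h2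
      rw [Real.norm_of_nonneg (lpDist_pow_nonneg p _ _)]
      exact hbd hR₂ _ h1 _ h2
    -- split the integral
    have hsplit : ∫ z, prodDist p z.1 z.2 ^ p ∂γ = (∫ z, f₁ z ∂γ) + ∫ z, f₂ z ∂γ := by
      rw [← integral_add hif₁ hif₂]
      refine integral_congr_ae (Filter.Eventually.of_forall fun z => ?_)
      show prodDist p z.1 z.2 ^ p = f₁ z + f₂ z
      simp only [hf₁def, hf₂def, hT₁def, hT₂def]
      exact prodDist_pow p hpne _ _
    rw [hsplit]
    -- bound each term by the marginal Wasserstein distance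
    have hbound : ∀ {n : ℕ} (α β : Measure (Vec n))
        (T : (Vec d₁ × Vec d₂) × (Vec d₁ × Vec d₂) → Vec n × Vec n) (hT : Measurable T)
        (h1 : γ.map (fun z => (T z).1) = α) (h2 : γ.map (fun z => (T z).2) = β),
        Wp p (lpDist p) α β ^ p ≤ ∫ z, lpDist p (T z).1 (T z).2 ^ p ∂γ := by
      intro n α β T hT h1 h2
      set γ' := γ.map T with hγ'def
      have hcoup : IsCoupling γ' α β := by
        refine ⟨Measure.isProbabilityMeasure_map hT.aemeasurable, ?_, ?_⟩
        · rw [hγ'def, Measure.map_map measurable_fst hT, ← h1]; rfl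
        · rw [hγ'def, Measure.map_map measurable_snd hT, ← h2]; rfl
      have hasm : AEStronglyMeasurable (fun z : Vec n × Vec n => lpDist p z.1 z.2 ^ p)
          (γ.map T) := (measurable_lpDist_pow (p := p) (n := n) hp0.le).aestronglyMeasurable
      have hint : ∫ z, lpDist p z.1 z.2 ^ p ∂γ' = ∫ z, lpDist p (T z).1 (T z).2 ^ p ∂γ := by
        rw [hγ'def, integral_map hT.aemeasurable hasm]
      have hle : Wp p (lpDist p) α β ≤ (∫ z, lpDist p z.1 z.2 ^ p ∂γ') ^ (1 / p) :=
        csInf_le ⟨0, fun s hs => wp_mem_nonneg p (lpDist p)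
          (fun x y => lpDist_nonneg p x y) α β s hs⟩ ⟨γ', hcoup, rfl⟩
      have hint0 : 0 ≤ ∫ z, lpDist p z.1 z.2 ^ p ∂γ' :=
        integral_nonneg fun z => lpDist_pow_nonneg p _ _
      calc Wp p (lpDist p) α β ^ p ≤ ((∫ z, lpDist p z.1 z.2 ^ p ∂γ') ^ (1 / p)) ^ p :=
            Real.rpow_le_rpow (wp_nonneg _ _ (fun x y => lpDist_nonneg p x y) _ _) hle hp0.le
        _ = ∫ z, lpDist p z.1 z.2 ^ p ∂γ' := by
            rw [one_div, Real.rpow_inv_rpow hint0 hpne]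
        _ = ∫ z, lpDist p (T z).1 (T z).2 ^ p ∂γ := hint
    have h1 := hbound μ₁ ν₁ T₁ hT₁ hmap11 hmap21
    have h2 := hbound μ₂ ν₂ T₂ hT₂ hmap12 hmap22
    exact add_le_add h1 h2
  -- conclude part 1
  have hne : Set.Nonempty ((fun γ : Measure ((Vec d₁ × Vec d₂) × (Vec d₁ × Vec d₂)) =>
      (∫ z, prodDist p z.1 z.2 ^ p ∂γ) ^ (1 / p)) '' {γ | IsCoupling γ π σ}) :=
    ⟨_, ⟨π.prod σ, prod_coupling π σ, rfl⟩⟩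
  have hAB : (A + B) ^ (1 / p) ≤ Wp p (prodDist p) π σ := by
    refine le_csInf hne ?_
    rintro s ⟨γ, hγ, rfl⟩
    have hint0 : 0 ≤ ∫ z, prodDist p z.1 z.2 ^ p ∂γ :=
      le_trans (add_nonneg hA0 hB0) (main γ hγ)
    exact Real.rpow_le_rpow (add_nonneg hA0 hB0) (main γ hγ) (by positivity)
  calc A + B = ((A + B) ^ (1 / p)) ^ p := by
        rw [one_div, Real.rpow_inv_rpow (add_nonneg hA0 hB0) hpne]
    _ ≤ Wp p (prodDist p) π σ ^ p :=
        Real.rpow_le_rpow (Real.rpow_nonneg (add_nonneg hA0 hB0) _) hAB hp0.le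

end Aux

/-- lower bound for the Wasserstein distance between couplings by the
marginal Wasserstein distances, and the resulting lower bound on the projection value. -/
theorem coupling_wasserstein_lower_bound
    (d₁ d₂ : ℕ) (X₁ : Set (Vec d₁)) (X₂ : Set (Vec d₂))
    (hX₁c : IsCompact X₁) (hX₂c : IsCompact X₂)
    (p : ℝ) (hp : 1 ≤ p)
    (μ₁ ν₁ : Measure (Vec d₁)) (μ₂ ν₂ : Measure (Vec d₂))
    (hμ₁ : ProbOn μ₁ X₁) (hν₁ : ProbOn ν₁ X₁) (hμ₂ : ProbOn μ₂ X₂) (hν₂ : ProbOn ν₂ X₂)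
    (π σ : Measure (Vec d₁ × Vec d₂)) (hπ : π ∈ Pi2 μ₁ μ₂) (hσ : σ ∈ Pi2 ν₁ ν₂) :
    Wp p (lpDist p) μ₁ ν₁ ^ p + Wp p (lpDist p) μ₂ ν₂ ^ p ≤ Wp p (prodDist p) π σ ^ p ∧
    (Wp p (lpDist p) μ₁ ν₁ ^ p + Wp p (lpDist p) μ₂ ν₂ ^ p) ^ (1 / p) ≤
      sInf ((fun σ' => Wp p (prodDist p) π σ') '' Pi2 ν₁ ν₂) := by
  have hp0 : (0 : ℝ) < p := lt_of_lt_of_le one_pos hp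
  have hpne : p ≠ 0 := hp0.ne'
  haveI : IsProbabilityMeasure ν₁ := hν₁.1
  haveI : IsProbabilityMeasure ν₂ := hν₂.1
  have hA0 : 0 ≤ Wp p (lpDist p) μ₁ ν₁ ^ p :=
    Real.rpow_nonneg (wp_nonneg _ _ (fun x y => lpDist_nonneg p x y) _ _) _
  have hB0 : 0 ≤ Wp p (lpDist p) μ₂ ν₂ ^ p :=
    Real.rpow_nonneg (wp_nonneg _ _ (fun x y => lpDist_nonneg p x y) _ _) _
  refine ⟨key hX₁c hX₂c hp hμ₁ hν₁ hμ₂ hν₂ hπ hσ, ?_⟩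
  have hνmem : (ν₁.prod ν₂) ∈ Pi2 ν₁ ν₂ := by
    refine ⟨by infer_instance, ?_, ?_⟩
    · rw [Measure.map_fst_prod]; simp
    · rw [Measure.map_snd_prod]; simp
  refine le_csInf ⟨_, ⟨ν₁.prod ν₂, hνmem, rfl⟩⟩ ?_
  rintro s ⟨σ', hσ', rfl⟩
  show _ ≤ Wp p (prodDist p) π σ'
  have hkey := key hX₁c hX₂c hp hμ₁ hν₁ hμ₂ hν₂ hπ hσ'
  have hW0 : 0 ≤ Wp p (prodDist p) π σ' :=
    wp_nonneg _ _ (fun x y => Real.rpow_nonneg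
      (add_nonneg (lpDist_pow_nonneg p _ _) (lpDist_pow_nonneg p _ _)) _) _ _
  calc (Wp p (lpDist p) μ₁ ν₁ ^ p + Wp p (lpDist p) μ₂ ν₂ ^ p) ^ (1 / p)
      ≤ (Wp p (prodDist p) π σ' ^ p) ^ (1 / p) :=
        Real.rpow_le_rpow (add_nonneg hA0 hB0) hkey (by positivity)
    _ = Wp p (prodDist p) π σ' := by
        rw [one_div, Real.rpow_rpow_inv hW0 hpne]

end
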